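/- The Morse complex M(K) of a finite connected simplicial complex K is a flag complex if and only if K is a tree. -/
import Mathlib


/-- An abstract simplicial complex on vertex type `V`: a collection of nonempty
finite subsets of `V` closed under passing to nonempty subsets. -/
structure ASC (V : Type*) where
  faces : Set (Finset V)
  nonempty_of_mem : ∀ {s : Finset V}, s ∈ faces → s.Nonempty
  down_closed : ∀ {s t : Finset V}, s ∈ faces → t ⊆ s → t.Nonempty → t ∈ faces

namespace ASC

variable {V W : Type*}

/-- A facet is a maximal face. -/
def IsFacet (K : ASC V) (s : Finset V) : Prop :=
  s ∈ K.faces ∧ ∀ t ∈ K.faces, s ⊆ t → s = t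

/-- `v` dominates `v'` if every facet containing `v'` also contains `v`. -/
def Dominates (K : ASC V) (v v' : V) : Prop :=
  v ≠ v' ∧ ∀ F, K.IsFacet F → v' ∈ F → v ∈ F

/-- Deletion of a vertex. -/
def delete (K : ASC V) (v' : V) : ASC V where
  faces := {s ∈ K.faces | v' ∉ s}
  nonempty_of_mem h := K.nonempty_of_mem h.1
  down_closed hs hts htne := ⟨K.down_closed hs.1 hts htne, fun hmem => hs.2 (hts hmem)⟩

/-- The complex consisting of a single point. -/
def point (p : V) : ASC V where
  faces := {{p}}
  nonempty_of_mem h := by simp only [Set.mem_singleton_iff] at h; subst h; exact ⟨p, by simp⟩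
  down_closed := by
    intro s t hs hts htne
    simp only [Set.mem_singleton_iff] at *
    subst hs
    rcases Finset.subset_singleton_iff.mp hts with h | h
    · exact absurd h (Finset.nonempty_iff_ne_empty.mp htne)
    · exact h

/-- Elementary strong collapses from `K` to `L`. -/
inductive StrongCollapsesTo : ASC V → ASC V → Prop
  | refl (K : ASC V) : StrongCollapsesTo K K
  | step {K L : ASC V} (v v' : V) : K.Dominates v v' →
      StrongCollapsesTo (K.delete v') L → StrongCollapsesTo K L

/-- A complex is strongly collapsible if it strong collapses to a point. -/
def StronglyCollapsible (K : ASC V) : Prop :=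
  ∃ p : V, StrongCollapsesTo K (ASC.point p)

/-- Elementary collapses (free face removals) from `K` to `L`. -/
inductive CollapsesTo : ASC V → ASC V → Prop
  | refl (K : ASC V) : CollapsesTo K K
  | step {K L M : ASC V} (σ τ : Finset V) :
      σ ∈ K.faces → τ ∈ K.faces → σ ⊂ τ →
      (∀ ρ ∈ K.faces, σ ⊂ ρ → ρ = τ) →
      L.faces = K.faces \ {σ, τ} →
      CollapsesTo L M → CollapsesTo K M

/-- A complex is collapsible if it collapses to a point. -/
def Collapsible (K : ASC V) : Prop :=
  ∃ p : V, CollapsesTo K (ASC.point p)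

/-- The image complex along a vertex map. -/
def map [DecidableEq W] (f : V → W) (K : ASC V) : ASC W where
  faces := (Finset.image f) '' K.faces
  nonempty_of_mem := by
    rintro s ⟨t, ht, rfl⟩
    exact (K.nonempty_of_mem ht).image f
  down_closed := by
    rintro s t ⟨u, hu, rfl⟩ hts htne
    obtain ⟨w, hw, rfl⟩ := Finset.subset_image_iff.mp hts
    exact ⟨w, K.down_closed hu hw (Finset.image_nonempty.mp htne), rfl⟩

/-- The join of two complexes on a common vertex type (intended for complexes
with disjoint vertex sets). -/
def join [DecidableEq V] (A B : ASC V) : ASC V where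
  faces := A.faces ∪ B.faces ∪ {s | ∃ a ∈ A.faces, ∃ b ∈ B.faces, s = a ∪ b}
  nonempty_of_mem := by
    rintro s (⟨h | h⟩ | ⟨a, ha, b, hb, rfl⟩)
    · exact A.nonempty_of_mem h
    · exact B.nonempty_of_mem h
    · exact (A.nonempty_of_mem ha).mono Finset.subset_union_left
  down_closed := by
    rintro s t (⟨h | h⟩ | ⟨a, ha, b, hb, rfl⟩) hts htne
    · exact Or.inl (Or.inl (A.down_closed h hts htne))
    · exact Or.inl (Or.inr (B.down_closed h hts htne))
    · by_cases hta : (t ∩ a).Nonempty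
      · by_cases htb : (t \ a).Nonempty
        · refine Or.inr ⟨t ∩ a, A.down_closed ha Finset.inter_subset_right hta,
            t \ a, B.down_closed hb ?_ htb, by ext x; simp only [Finset.mem_union, Finset.mem_inter, Finset.mem_sdiff]; tauto⟩
          intro x hx
          rcases Finset.mem_union.mp (hts (Finset.mem_sdiff.mp hx).1) with h1 | h1
          · exact absurd h1 (Finset.mem_sdiff.mp hx).2
          · exact h1
        · refine Or.inl (Or.inl (A.down_closed ha ?_ htne))
          intro x hx
          by_contra hxa
          exact htb ⟨x, Finset.mem_sdiff.mpr ⟨hx, hxa⟩⟩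
      · refine Or.inl (Or.inr (B.down_closed hb ?_ htne))
        intro x hx
        rcases Finset.mem_union.mp (hts hx) with h1 | h1
        · exact absurd ⟨x, Finset.mem_inter.mpr ⟨hx, h1⟩⟩ hta
        · exact h1

/-- Disjoint union of two complexes. -/
def disjUnion [DecidableEq V] [DecidableEq W] (K : ASC V) (L : ASC W) : ASC (V ⊕ W) where
  faces := (K.map Sum.inl).faces ∪ (L.map Sum.inr).faces
  nonempty_of_mem := by
    rintro s (h | h)
    · exact (K.map Sum.inl).nonempty_of_mem h
    · exact (L.map Sum.inr).nonempty_of_mem h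
  down_closed := by
    rintro s t (h | h) hts htne
    · exact Or.inl ((K.map Sum.inl).down_closed h hts htne)
    · exact Or.inr ((L.map Sum.inr).down_closed h hts htne)

/-- Connectivity of a complex via edge paths. -/
def Connected [DecidableEq V] (K : ASC V) : Prop :=
  ∀ u v : V, {u} ∈ K.faces → {v} ∈ K.faces →
    ∃ (k : ℕ) (c : ℕ → V), c 0 = u ∧ c k = v ∧
      ∀ i < k, ({c i, c (i + 1)} : Finset V) ∈ K.faces

/-- A flag complex: every set of pairwise adjacent vertices spans a simplex. -/
def IsFlag [DecidableEq V] (K : ASC V) : Prop :=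
  ∀ s : Finset V, s.Nonempty → (∀ v ∈ s, ({v} : Finset V) ∈ K.faces) →
    (∀ u ∈ s, ∀ v ∈ s, u ≠ v → ({u, v} : Finset V) ∈ K.faces) → s ∈ K.faces

/-- A tree: a connected `1`-dimensional complex with no (injective) cycles. -/
def IsTree [DecidableEq V] (K : ASC V) : Prop :=
  (∀ s ∈ K.faces, s.card ≤ 2) ∧ K.Connected ∧
    ¬ ∃ (k : ℕ) (c : ℕ → V), 3 ≤ k ∧ (∀ i < k, ∀ j < k, c i = c j → i = j) ∧
      (∀ i < k, ({c i, c (i + 1)} : Finset V) ∈ K.faces) ∧ c k = c 0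

/-- The star of a vertex. -/
def star [DecidableEq V] (K : ASC V) (v : V) : ASC V where
  faces := {s ∈ K.faces | insert v s ∈ K.faces}
  nonempty_of_mem h := K.nonempty_of_mem h.1
  down_closed := by
    rintro s t ⟨hs, hvs⟩ hts htne
    exact ⟨K.down_closed hs hts htne,
      K.down_closed hvs (Finset.insert_subset_insert v hts) (Finset.insert_nonempty v t)⟩

/-- The star cluster of a simplex. -/
def starCluster [DecidableEq V] (K : ASC V) (σ : Finset V) : ASC V where
  faces := ⋃ v ∈ σ, (K.star v).faces
  nonempty_of_mem := by
    rintro s hs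
    simp only [Set.mem_iUnion] at hs
    obtain ⟨v, _, hv⟩ := hs
    exact (K.star v).nonempty_of_mem hv
  down_closed := by
    intro s t hs hts htne
    simp only [Set.mem_iUnion] at *
    obtain ⟨v, hvσ, hv⟩ := hs
    exact ⟨v, hvσ, (K.star v).down_closed hv hts htne⟩

end ASC

/-- A nontrivial closed V-path for a discrete vector field. -/
def hasClosedPath {V : Type*} (S : Set (Finset V × Finset V)) : Prop :=
  ∃ (k : ℕ) (α β : ℕ → Finset V), 0 < k ∧
    (∀ i < k, (α i, β i) ∈ S ∧ α (i + 1) ⊆ β i ∧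
      (β i).card = (α (i + 1)).card + 1 ∧ α (i + 1) ≠ α i) ∧
    α k = α 0

theorem hasClosedPath.mono {V : Type*} {S T : Set (Finset V × Finset V)}
    (h : hasClosedPath S) (hST : S ⊆ T) : hasClosedPath T := by
  obtain ⟨k, α, β, hk, hstep, hcl⟩ := h
  exact ⟨k, α, β, hk, fun i hi => ⟨hST (hstep i hi).1, (hstep i hi).2.1,
    (hstep i hi).2.2.1, (hstep i hi).2.2.2⟩, hcl⟩

/-- A discrete vector field on a collection `C` of simplices: codimension-one
pairs from `C` with each simplex occurring in at most one pair. -/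
def IsMatching {V : Type*} (C : Set (Finset V)) (M : Set (Finset V × Finset V)) : Prop :=
  (∀ p ∈ M, p.1 ∈ C ∧ p.2 ∈ C ∧ p.1 ⊆ p.2 ∧ p.2.card = p.1.card + 1) ∧
  (∀ p ∈ M, ∀ q ∈ M, p ≠ q → p.1 ≠ q.1 ∧ p.1 ≠ q.2 ∧ p.2 ≠ q.1 ∧ p.2 ≠ q.2)

/-- An acyclic matching: a discrete vector field with no nontrivial closed V-path. -/
def IsAcyclicMatching {V : Type*} (C : Set (Finset V)) (M : Set (Finset V × Finset V)) : Prop :=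
  IsMatching C M ∧ ¬ hasClosedPath M

/-- A gradient vector field on a complex `K`. -/
def IsGVF {V : Type*} (K : ASC V) (S : Set (Finset V × Finset V)) : Prop :=
  IsAcyclicMatching K.faces S

theorem IsGVF.mono {V : Type*} {K : ASC V} {S T : Set (Finset V × Finset V)}
    (h : IsGVF K T) (hST : S ⊆ T) : IsGVF K S :=
  ⟨⟨fun p hp => h.1.1 p (hST hp), fun p hp q hq => h.1.2 p (hST hp) q (hST hq)⟩,
    fun hc => h.2 (hc.mono hST)⟩

/-- The Morse complex of `K`: vertices are primitive gradient vector fields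
(codimension-one pairs), faces are gradient vector fields. -/
def MorseComplex {V : Type*} (K : ASC V) : ASC (Finset V × Finset V) where
  faces := {s | s.Nonempty ∧ IsGVF K ↑s}
  nonempty_of_mem h := h.1
  down_closed := by
    intro s t hs hts htne
    exact ⟨htne, hs.2.mono (Finset.coe_subset.mpr hts)⟩

section Spaces

/-- The geometric realization of a complex on a finite vertex type. -/
abbrev ASC.realization {V : Type*} [Fintype V] (K : ASC V) : Type _ :=
  {f : V → ℝ // (∀ v, 0 ≤ f v) ∧ (∑ v, f v) = 1 ∧ ∃ s ∈ K.faces, ∀ v, f v ≠ 0 → v ∈ s}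

/-- The `n`-sphere. -/
abbrev Sph (n : ℕ) := Metric.sphere (0 : EuclideanSpace ℝ (Fin (n + 1))) 1

noncomputable def spherePt (n : ℕ) : Sph n :=
  ⟨EuclideanSpace.single 0 1, by
    simp [mem_sphere_zero_iff_norm, EuclideanSpace.norm_single]⟩

/-- The wedge of `k` copies of the `n`-sphere (a point if `k = 0`). -/
def Wedge (k n : ℕ) : Type :=
  Quot (fun p q : (Fin k × Sph n) ⊕ Unit =>
    (∃ i : Fin k, p = Sum.inl (i, spherePt n)) ∧ q = Sum.inr ())

noncomputable instance (k n : ℕ) : TopologicalSpace (Wedge k n) := by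
  unfold Wedge; infer_instance

/-- Unreduced suspension. -/
def Susp (X : Type*) [TopologicalSpace X] : Type _ :=
  Quot (fun p q : X × unitInterval => p.2 = q.2 ∧ (p.2 = 0 ∨ p.2 = 1))

instance (X : Type*) [TopologicalSpace X] : TopologicalSpace (Susp X) := by
  unfold Susp; infer_instance

/-- Iterated suspension, as an operation on bundled topological spaces. -/
noncomputable def iterSusp : ℕ → TopCat → TopCat
  | 0, X => X
  | (n + 1), X => TopCat.of (Susp (iterSusp n X))

end Spaces

section Graphs

/-- The `1`-dimensional complex spanned by a set of (edge) finsets. -/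
def graphASC {V : Type*} (E : Set (Finset V)) : ASC V where
  faces := {s | s.Nonempty ∧ ∃ e ∈ E, s ⊆ e}
  nonempty_of_mem h := h.1
  down_closed := by
    rintro s t ⟨_, e, he, hse⟩ hts htne
    exact ⟨htne, e, he, hts.trans hse⟩

/-- The path of length `u` on vertices `0, 1, …, u`. -/
def pathComplex (u : ℕ) : ASC (Fin (u + 1)) :=
  graphASC {e | ∃ i : Fin u, e = {i.castSucc, i.succ}}

/-- Vertex type for a path of length `t` with extended stars `S_{m,n}` and
`S_{k,l}` attached at the two endpoints. -/
abbrev WGV (t m n k l : ℕ) :=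
  Fin (t + 1) ⊕ (Fin m ⊕ Fin n × Fin 2) ⊕ (Fin k ⊕ Fin l × Fin 2)

/-- The graph `P_t ∨ S_{m,n} ∨ S_{k,l}`: the extended star `S_{m,n}` (a one-point
union of `m` paths of length 1 and `n` paths of length 2) has its center at the
endpoint `v₀` of the path, and `S_{k,l}` has its center at the endpoint `v_t`.
With `t = 0` (and `k = l = 0`) this is the extended star graph `S_{m,n}` itself. -/
def wedgeGraph (t m n k l : ℕ) : ASC (WGV t m n k l) :=
  graphASC {e |
    (∃ i : Fin t, e = {Sum.inl i.castSucc, Sum.inl i.succ}) ∨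
    (∃ j : Fin m, e = {Sum.inl 0, Sum.inr (Sum.inl (Sum.inl j))}) ∨
    (∃ i : Fin n, e = {Sum.inl 0, Sum.inr (Sum.inl (Sum.inr (i, 0)))}) ∨
    (∃ i : Fin n, e = {Sum.inr (Sum.inl (Sum.inr (i, 0))), Sum.inr (Sum.inl (Sum.inr (i, 1)))}) ∨
    (∃ j : Fin k, e = {Sum.inl (Fin.last t), Sum.inr (Sum.inr (Sum.inl j))}) ∨
    (∃ s : Fin l, e = {Sum.inl (Fin.last t), Sum.inr (Sum.inr (Sum.inr (s, 0)))}) ∨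
    (∃ s : Fin l, e = {Sum.inr (Sum.inr (Sum.inr (s, 0))), Sum.inr (Sum.inr (Sum.inr (s, 1)))})}

/-- `K ∨_v P_m`: attach a path of length `m` to the vertex `v` of `K` by one
endpoint. -/
def attachPath {V : Type*} [DecidableEq V] (K : ASC V) (v : V) (m : ℕ) : ASC (V ⊕ Fin m) where
  faces := (K.map Sum.inl).faces ∪
    {s | s.Nonempty ∧ ∃ e : Finset (V ⊕ Fin m),
      ((∃ i : Fin m, i.val = 0 ∧ e = {Sum.inl v, Sum.inr i}) ∨
       (∃ i j : Fin m, j.val = i.val + 1 ∧ e = {Sum.inr i, Sum.inr j})) ∧ s ⊆ e}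
  nonempty_of_mem := by
    rintro s (h | h)
    · exact (K.map Sum.inl).nonempty_of_mem h
    · exact h.1
  down_closed := by
    rintro s t (h | ⟨_, e, he, hse⟩) hts htne
    · exact Or.inl ((K.map Sum.inl).down_closed h hts htne)
    · exact Or.inr ⟨htne, e, he, hts.trans hse⟩

end Graphs

section Posets

/-- An alternating cycle `b₁ ≻ a₁ ≺ b₂ ≻ a₂ ≺ ⋯ ≺ b_p ≻ a_p ≺ b₁` for a set of
covering pairs in a poset. -/
def HasPosetCycle {P : Type*} [PartialOrder P] (S : Set (P × P)) : Prop :=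
  ∃ p : ℕ, 2 ≤ p ∧ ∃ a b : ℕ → P,
    (∀ i < p, (a i, b i) ∈ S) ∧
    (∀ i < p, a i ⋖ b ((i + 1) % p)) ∧
    (∀ i < p, ∀ j < p, a i = a j → i = j) ∧
    (∀ i < p, ∀ j < p, b i = b j → i = j)

theorem HasPosetCycle.mono {P : Type*} [PartialOrder P] {S T : Set (P × P)}
    (h : HasPosetCycle S) (hST : S ⊆ T) : HasPosetCycle T := by
  obtain ⟨p, hp, a, b, h1, h2, h3, h4⟩ := h
  exact ⟨p, hp, a, b, fun i hi => hST (h1 i hi), h2, h3, h4⟩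

/-- The complex `f(P)` of acyclic matchings on the Hasse diagram of a poset `P`:
vertices are covering pairs, faces are acyclic matchings. -/
def posetMatchingComplex (P : Type*) [PartialOrder P] : ASC (P × P) where
  faces := {s | s.Nonempty ∧ (∀ p ∈ s, p.1 ⋖ p.2) ∧
    (∀ p ∈ s, ∀ q ∈ s, p ≠ q → p.1 ≠ q.1 ∧ p.1 ≠ q.2 ∧ p.2 ≠ q.1 ∧ p.2 ≠ q.2) ∧
    ¬ HasPosetCycle (↑s : Set (P × P))}
  nonempty_of_mem h := h.1
  down_closed := by
    intro s t hs hts htne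
    refine ⟨htne, fun p hp => hs.2.1 p (hts hp),
      fun p hp q hq => hs.2.2.1 p (hts hp) q (hts hq), fun hc => hs.2.2.2 ?_⟩
    exact hc.mono (Finset.coe_subset.mpr hts)

end Posets



lemma aux_mod_two_ne {k i : ℕ} (hk : 3 ≤ k) (hi : i < k) : (i + 2) % k ≠ i := by
  rcases Nat.lt_or_ge (i + 2) k with h | h
  · rw [Nat.mod_eq_of_lt h]; omega
  · rw [Nat.mod_eq_sub_mod h, Nat.mod_eq_of_lt (by omega)]; omega

lemma aux_no_closedPath_singleton {V : Type*} (p : Finset V × Finset V) :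
    ¬ hasClosedPath ({p} : Set (Finset V × Finset V)) := by
  rintro ⟨m, α, β, hm, hstep, hcl⟩
  rcases Nat.lt_or_ge 1 m with h1 | h1
  · have ha1 : α 1 = p.1 := congrArg Prod.fst (hstep 1 h1).1
    have ha0 : α 0 = p.1 := congrArg Prod.fst (hstep 0 hm).1
    exact (hstep 0 hm).2.2.2 (ha1.trans ha0.symm)
  · have hm1 : m = 1 := by omega
    subst hm1
    exact (hstep 0 hm).2.2.2 hcl

lemma aux_closedPath_pair {V : Type*} {p q : Finset V × Finset V} (hpq : p.1 ≠ q.1)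
    (h : hasClosedPath ({p, q} : Set (Finset V × Finset V))) :
    q.1 ⊆ p.2 ∧ p.1 ⊆ q.2 := by
  obtain ⟨m, α, β, hm, hstep, hcl⟩ := h
  have hmem : ∀ i < m, (α i, β i) = p ∨ (α i, β i) = q := by
    intro i hi
    have := (hstep i hi).1
    simpa [Set.mem_insert_iff, Set.mem_singleton_iff] using this
  have hmemα : ∀ i < m, α i = p.1 ∨ α i = q.1 := by
    intro i hi
    rcases hmem i hi with h | h
    · exact Or.inl (congrArg Prod.fst h)
    · exact Or.inr (congrArg Prod.fst h)
  have hβp : ∀ i < m, α i = p.1 → β i = p.2 := by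
    intro i hi hα
    rcases hmem i hi with h | h
    · exact congrArg Prod.snd h
    · exact absurd (hα ▸ congrArg Prod.fst h : p.1 = q.1) hpq
  have hβq : ∀ i < m, α i = q.1 → β i = q.2 := by
    intro i hi hα
    rcases hmem i hi with h | h
    · exact absurd (hα ▸ congrArg Prod.fst h : q.1 = p.1) (Ne.symm hpq)
    · exact congrArg Prod.snd h
  have hm2 : 2 ≤ m := by
    by_contra hlt
    have hm1 : m = 1 := by omega
    subst hm1
    exact (hstep 0 hm).2.2.2 hcl
  have hα2 : α 2 = p.1 ∨ α 2 = q.1 := by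
    rcases Nat.lt_or_ge 2 m with h2 | h2
    · exact hmemα 2 h2
    · have : m = 2 := by omega
      rw [← this, hcl]
      exact hmemα 0 hm
  have h01 : α 1 ≠ α 0 := (hstep 0 hm).2.2.2
  have h12 : α 2 ≠ α 1 := (hstep 1 (by omega)).2.2.2
  rcases hmemα 0 hm with h0 | h0 <;> rcases hmemα 1 (by omega) with h1 | h1
  · exact absurd (h1.trans h0.symm) h01
  · constructor
    · have hs := (hstep 0 hm).2.1
      rw [h1, hβp 0 hm h0] at hs
      exact hs
    · have hs := (hstep 1 (by omega)).2.1
      rw [hβq 1 (by omega) h1] at hs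
      rcases hα2 with h2 | h2
      · rw [h2] at hs; exact hs
      · exact absurd (h2.trans h1.symm) h12
  · constructor
    · have hs := (hstep 1 (by omega)).2.1
      rw [hβp 1 (by omega) h1] at hs
      rcases hα2 with h2 | h2
      · exact absurd (h2.trans h1.symm) h12
      · rw [h2] at hs; exact hs
    · have hs := (hstep 0 hm).2.1
      rw [h1, hβq 0 hm h0] at hs
      exact hs
  · exact absurd (h1.trans h0.symm) h01

/-- The Morse complex of a finite connected simplicial complex `K` is a
flag complex if and only if `K` is a tree. -/
theorem morse_flag_iff_tree {V : Type*} [Fintype V] [DecidableEq V] (K : ASC V)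
    (hne : K.faces.Nonempty) (hconn : K.Connected) :
    (MorseComplex K).IsFlag ↔ K.IsTree := by
  classical
  constructor
  · intro hflag
    have hnocyc : ¬ ∃ (k : ℕ) (c : ℕ → V), 3 ≤ k ∧ (∀ i < k, ∀ j < k, c i = c j → i = j) ∧
        (∀ i < k, ({c i, c (i + 1)} : Finset V) ∈ K.faces) ∧ c k = c 0 := by
      rintro ⟨k, c, hk3, hinj, hedges, hclose⟩
      have hsucc : ∀ i < k, c (i + 1) = c ((i + 1) % k) := by
        intro i hi
        rcases Nat.lt_or_ge (i + 1) k with h | h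
        · rw [Nat.mod_eq_of_lt h]
        · have hik : i + 1 = k := by omega
          rw [hik, hclose, Nat.mod_self]
      have hidx : ∀ i < k, ∀ j < k, c j = c (i + 1) → j = (i + 1) % k := by
        intro i hi j hj h
        rw [hsucc i hi] at h
        exact hinj j hj _ (Nat.mod_lt _ (by omega)) h
      have hne : ∀ i < k, c (i + 1) ≠ c i := by
        intro i hi h
        have hmi := hidx i hi i hi h.symm
        rcases Nat.lt_or_ge (i + 1) k with h' | h'
        · rw [Nat.mod_eq_of_lt h'] at hmi; omega
        · have hik : i + 1 = k := by omega
          rw [hik, Nat.mod_self] at hmi; omega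
      have htwo : ∀ i < k, ∀ j < k, c j = c (i + 1) → c i = c (j + 1) → False := by
        intro i hi j hj h1 h2
        have e1 := hidx i hi j hj h1
        have e2 := hidx j hj i hi h2
        rw [e1, Nat.mod_add_mod] at e2
        exact aux_mod_two_ne hk3 hi e2.symm
      have hedgecard : ∀ i < k, ({c i, c (i + 1)} : Finset V).card = 2 :=
        fun i hi => Finset.card_pair (Ne.symm (hne i hi))
      have hsing : ∀ i < k, ({c i} : Finset V) ∈ K.faces := fun i hi =>
        K.down_closed (hedges i hi) (by simp) (Finset.singleton_nonempty _)
      set p : ℕ → Finset V × Finset V := fun i => ({c i}, {c i, c (i + 1)}) with hp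
      have hvalid : ∀ i < k, (p i).1 ∈ K.faces ∧ (p i).2 ∈ K.faces ∧ (p i).1 ⊆ (p i).2 ∧
          (p i).2.card = (p i).1.card + 1 := by
        intro i hi
        refine ⟨hsing i hi, hedges i hi, by simp [hp], ?_⟩
        simp [hp, hedgecard i hi]
      have hedge_ne : ∀ i < k, ∀ j < k, ({c i, c (i + 1)} : Finset V) = {c j, c (j + 1)} → i = j := by
        intro i hi j hj h
        by_contra hij
        have hci : c i = c j ∨ c i = c (j + 1) := by
          have hm : c i ∈ ({c j, c (j + 1)} : Finset V) := by rw [← h]; simp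
          simpa using hm
        have hci1 : c (i + 1) = c j ∨ c (i + 1) = c (j + 1) := by
          have hm : c (i + 1) ∈ ({c j, c (j + 1)} : Finset V) := by rw [← h]; simp
          simpa using hm
        rcases hci with h1 | h1
        · exact hij (hinj i hi j hj h1)
        · rcases hci1 with h2 | h2
          · exact htwo j hj i hi h1 h2.symm
          · exact hne i hi (h2.trans h1.symm)
      have hpne : ∀ i < k, ∀ j < k, i ≠ j →
          (p i).1 ≠ (p j).1 ∧ (p i).1 ≠ (p j).2 ∧ (p i).2 ≠ (p j).1 ∧ (p i).2 ≠ (p j).2 := by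
        intro i hi j hj hij
        refine ⟨?_, ?_, ?_, ?_⟩
        · intro h
          simp only [hp] at h
          exact hij (hinj i hi j hj (Finset.singleton_inj.mp h))
        · intro h
          have hcd := congrArg Finset.card h
          simp only [hp, Finset.card_singleton, hedgecard j hj] at hcd
          omega
        · intro h
          have hcd := congrArg Finset.card h
          simp only [hp, Finset.card_singleton, hedgecard i hi] at hcd
          omega
        · intro h
          simp only [hp] at h
          exact hij (hedge_ne i hi j hj h)
      have hsingface : ∀ i < k, ({p i} : Finset (Finset V × Finset V)) ∈ (MorseComplex K).faces := by
        intro i hi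
        refine ⟨Finset.singleton_nonempty _, ⟨?_, ?_⟩, ?_⟩
        · intro q hq
          simp only [Finset.coe_singleton, Set.mem_singleton_iff] at hq
          subst hq; exact hvalid i hi
        · intro q hq r hr hqr
          simp only [Finset.coe_singleton, Set.mem_singleton_iff] at hq hr
          exact absurd (hq.trans hr.symm) hqr
        · rw [Finset.coe_singleton]; exact aux_no_closedPath_singleton _
      have hpairface : ∀ i < k, ∀ j < k, i ≠ j →
          ({p i, p j} : Finset (Finset V × Finset V)) ∈ (MorseComplex K).faces := by
        intro i hi j hj hij
        refine ⟨Finset.insert_nonempty _ _, ⟨?_, ?_⟩, ?_⟩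
        · intro q hq
          simp only [Finset.coe_insert, Finset.coe_singleton, Set.mem_insert_iff,
            Set.mem_singleton_iff] at hq
          rcases hq with rfl | rfl
          exacts [hvalid i hi, hvalid j hj]
        · intro q hq r hr hqr
          simp only [Finset.coe_insert, Finset.coe_singleton, Set.mem_insert_iff,
            Set.mem_singleton_iff] at hq hr
          rcases hq with rfl | rfl <;> rcases hr with rfl | rfl
          · exact absurd rfl hqr
          · exact hpne i hi j hj hij
          · exact hpne j hj i hi (Ne.symm hij)
          · exact absurd rfl hqr
        · intro hcp
          have hcoe : (↑({p i, p j} : Finset (Finset V × Finset V)) : Set (Finset V × Finset V))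
              = {p i, p j} := by simp
          rw [hcoe] at hcp
          obtain ⟨hji, hij'⟩ := aux_closedPath_pair (hpne i hi j hj hij).1 hcp
          simp only [hp] at hji hij'
          have h1 : c j = c i ∨ c j = c (i + 1) := by
            simpa using hji (Finset.mem_singleton_self _)
          have h2 : c i = c j ∨ c i = c (j + 1) := by
            simpa using hij' (Finset.mem_singleton_self _)
          rcases h1 with h1 | h1
          · exact hij (hinj j hj i hi h1).symm
          rcases h2 with h2 | h2
          · exact hij (hinj i hi j hj h2)
          exact htwo i hi j hj h1 h2
      set s : Finset (Finset V × Finset V) := (Finset.range k).image p with hs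
      have hsface : s ∈ (MorseComplex K).faces := by
        refine hflag s ?_ ?_ ?_
        · exact Finset.Nonempty.image ⟨0, Finset.mem_range.mpr (by omega)⟩ p
        · intro v hv
          obtain ⟨i, hi, rfl⟩ := Finset.mem_image.mp hv
          exact hsingface i (Finset.mem_range.mp hi)
        · intro u hu v hv huv
          obtain ⟨i, hi, rfl⟩ := Finset.mem_image.mp hu
          obtain ⟨j, hj, rfl⟩ := Finset.mem_image.mp hv
          exact hpairface i (Finset.mem_range.mp hi) j (Finset.mem_range.mp hj)
            (fun h => huv (by rw [h]))
      obtain ⟨-, -, hnocp⟩ := hsface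
      apply hnocp
      refine ⟨k, fun i => {c i}, fun i => {c i, c (i + 1)}, by omega, ?_, ?_⟩
      · intro i hi
        refine ⟨?_, by simp, by simp [hedgecard i hi], ?_⟩
        · exact Finset.mem_coe.mpr (Finset.mem_image.mpr ⟨i, Finset.mem_range.mpr hi, by rw [hp]⟩)
        · intro h
          exact hne i hi (Finset.singleton_inj.mp h)
      · show ({c k} : Finset V) = {c 0}
        rw [hclose]
    refine ⟨?_, hconn, hnocyc⟩
    intro t ht
    by_contra hcard
    push_neg at hcard
    obtain ⟨u, hut, hu3⟩ := Finset.exists_subset_card_eq (show 3 ≤ t.card by omega)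
    obtain ⟨a, b, d, hab, had, hbd, rfl⟩ := Finset.card_eq_three.mp hu3
    have hat : a ∈ t := hut (by simp)
    have hbt : b ∈ t := hut (by simp)
    have hdt : d ∈ t := hut (by simp)
    have hface : ∀ x ∈ t, ∀ y ∈ t, ({x, y} : Finset V) ∈ K.faces := by
      intro x hx y hy
      exact K.down_closed ht (by simp [Finset.insert_subset_iff, hx, hy]) ⟨x, by simp⟩
    apply hnocyc
    set f : ℕ → V := fun i => if i % 3 = 0 then a else if i % 3 = 1 then b else d with hf
    have f0 : f 0 = a := by norm_num [hf]
    have f1 : f 1 = b := by norm_num [hf]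
    have f2 : f 2 = d := by norm_num [hf]
    have f3 : f 3 = a := by norm_num [hf]
    refine ⟨3, f, le_refl 3, ?_, ?_, ?_⟩
    · intro i hi j hj h
      interval_cases i <;> interval_cases j <;> simp only [f0, f1, f2] at h <;>
        first
          | rfl
          | exact absurd h hab
          | exact absurd h (Ne.symm hab)
          | exact absurd h had
          | exact absurd h (Ne.symm had)
          | exact absurd h hbd
          | exact absurd h (Ne.symm hbd)
    · intro i hi
      interval_cases i
      · rw [show (0 : ℕ) + 1 = 1 from rfl, f0, f1]; exact hface a hat b hbt
      · rw [show (1 : ℕ) + 1 = 2 from rfl, f1, f2]; exact hface b hbt d hdt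
      · rw [show (2 : ℕ) + 1 = 3 from rfl, f2, f3]; exact hface d hdt a hat
    · simp only [f3, f0]
  · rintro ⟨hdim, -, hnocyc⟩
    intro s hsne hvert hedge
    have hmatch1 : ∀ q ∈ s, q.1 ∈ K.faces ∧ q.2 ∈ K.faces ∧ q.1 ⊆ q.2 ∧
        q.2.card = q.1.card + 1 := by
      intro q hq
      exact (hvert q hq).2.1.1 q (by simp)
    have hmatch2 : ∀ q ∈ s, ∀ r ∈ s, q ≠ r →
        q.1 ≠ r.1 ∧ q.1 ≠ r.2 ∧ q.2 ≠ r.1 ∧ q.2 ≠ r.2 := by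
      intro q hq r hr hqr
      exact (hedge q hq r hr hqr).2.1.2 q (by simp) r (by simp) hqr
    refine ⟨hsne, ⟨fun q hq => hmatch1 q (Finset.mem_coe.mp hq),
      fun q hq r hr => hmatch2 q (Finset.mem_coe.mp hq) r (Finset.mem_coe.mp hr)⟩, ?_⟩
    rintro ⟨m, α, β, hm, hstep, hcl⟩
    have hst : ∀ i < m, (α i, β i) ∈ s := fun i hi => Finset.mem_coe.mp (hstep i hi).1
    have hcard1 : ∀ q ∈ s, q.1.card = 1 := by
      intro q hq
      obtain ⟨h1, h2, -, h4⟩ := hmatch1 q hq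
      have hc2 := hdim q.2 h2
      have hc0 := Finset.card_pos.mpr (K.nonempty_of_mem h1)
      omega
    have hα : ∀ i ≤ m, (α i).card = 1 := by
      intro i hi
      rcases Nat.lt_or_ge i m with h | h
      · exact hcard1 _ (hst i h)
      · have him : i = m := by omega
        rw [him, hcl]
        exact hcard1 _ (hst 0 hm)
    obtain ⟨v0, hv0⟩ := Finset.card_eq_one.mp (hα 0 (by omega))
    set c : ℕ → V := fun i => if h : (α i).Nonempty then h.choose else v0 with hcdef
    have hc : ∀ i ≤ m, α i = {c i} := by
      intro i hi
      obtain ⟨v, hv⟩ := Finset.card_eq_one.mp (hα i hi)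
      have hne' : (α i).Nonempty := by rw [hv]; exact Finset.singleton_nonempty v
      have hch : c i ∈ α i := by
        simp only [hcdef, dif_pos hne']
        exact hne'.choose_spec
      rw [hv] at hch
      rw [hv, Finset.mem_singleton.mp hch]
    have hcne : ∀ i < m, c (i + 1) ≠ c i := by
      intro i hi h
      apply (hstep i hi).2.2.2
      rw [hc (i + 1) (by omega), hc i (by omega), h]
    have hsub : ∀ i < m, ({c i, c (i + 1)} : Finset V) ⊆ β i := by
      intro i hi
      have h1 : α i ⊆ β i := (hmatch1 _ (hst i hi)).2.2.1
      have h2 : α (i + 1) ⊆ β i := (hstep i hi).2.1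
      rw [hc i (by omega)] at h1
      rw [hc (i + 1) (by omega)] at h2
      intro x hx
      rcases Finset.mem_insert.mp hx with rfl | hx
      · exact h1 (Finset.mem_singleton_self _)
      · exact h2 hx
    have hβcard : ∀ i < m, (β i).card = 2 := by
      intro i hi
      have h1 := (hmatch1 _ (hst i hi)).2.2.2
      have h2 := hα i (le_of_lt hi)
      simp only at h1 h2
      omega
    have hβ : ∀ i < m, β i = {c i, c (i + 1)} := by
      intro i hi
      refine (Finset.eq_of_subset_of_card_le (hsub i hi) ?_).symm
      rw [hβcard i hi, Finset.card_pair (Ne.symm (hcne i hi))]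
    have hβface : ∀ i < m, ({c i, c (i + 1)} : Finset V) ∈ K.faces := by
      intro i hi
      rw [← hβ i hi]
      exact (hmatch1 _ (hst i hi)).2.1
    have hβne : ∀ i < m, ∀ j < m, c i ≠ c j → β i ≠ β j := by
      intro i hi j hj hne'
      have hpq : ((α i, β i) : Finset V × Finset V) ≠ (α j, β j) := by
        intro h
        apply hne'
        have h1 := congrArg Prod.fst h
        simp only at h1
        rw [hc i (le_of_lt hi), hc j (le_of_lt hj)] at h1
        exact Finset.singleton_inj.mp h1
      exact (hmatch2 _ (hst i hi) _ (hst j hj) hpq).2.2.2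
    have hcm : c m = c 0 := by
      have h1 := hc m le_rfl
      rw [hcl, hc 0 (by omega)] at h1
      exact (Finset.singleton_inj.mp h1).symm
    have hex : ∃ d, 0 < d ∧ ∃ i, i + d ≤ m ∧ c (i + d) = c i :=
      ⟨m, hm, 0, by omega, by rw [Nat.zero_add]; exact hcm⟩
    obtain ⟨hd0, i0, hi0m, hi0⟩ := Nat.find_spec hex
    have hd1 : Nat.find hex ≠ 1 := by
      intro h
      rw [h] at hi0m hi0
      exact hcne i0 (by omega) hi0
    have hd2 : Nat.find hex ≠ 2 := by
      intro h
      rw [h] at hi0m hi0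
      have e1 : β (i0 + 1) = {c (i0 + 1), c (i0 + 1 + 1)} := hβ (i0 + 1) (by omega)
      have e0 : β i0 = {c i0, c (i0 + 1)} := hβ i0 (by omega)
      apply hβne i0 (by omega) (i0 + 1) (by omega) (Ne.symm (hcne i0 (by omega)))
      rw [e0, e1, show i0 + 1 + 1 = i0 + 2 from rfl, hi0, Finset.pair_comm]
    have hd3 : 3 ≤ Nat.find hex := by omega
    have hinj' : ∀ a < Nat.find hex, ∀ b < Nat.find hex, c (i0 + a) = c (i0 + b) → a = b := by
      have key : ∀ a b, a < b → b < Nat.find hex → c (i0 + a) ≠ c (i0 + b) := by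
        intro a b hab hb h
        apply Nat.find_min hex (show b - a < Nat.find hex by omega)
        exact ⟨by omega, i0 + a, by omega, by rw [show i0 + a + (b - a) = i0 + b by omega]; exact h.symm⟩
      intro a ha b hb h
      rcases Nat.lt_trichotomy a b with h' | h' | h'
      · exact absurd h (key a b h' hb)
      · exact h'
      · exact absurd h.symm (key b a h' ha)
    apply hnocyc
    refine ⟨Nat.find hex, fun j => c (i0 + j), hd3, hinj', ?_, ?_⟩
    · intro j hj
      exact hβface (i0 + j) (by omega)
    · show c (i0 + Nat.find hex) = c (i0 + 0)
      rw [Nat.add_zero]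
      exact hi0
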